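/- Let (f_i)_{i∈I} be a family of continuous self-maps of X that is compact in the uniform (supremum) metric. Then the Hutchinson operator F(B) = cl{f_i(b) : i ∈ I, b ∈ B} maps nonempty compact sets to nonempty compact sets and is continuous as a map from (𝒦(X), h) to itself. -/

import Mathlib

open Set Filter Metric
open scoped Uniformity Topology

/-- A family of continuous maps whose range is compact in the uniform metric is
equicontinuous (explicit ε-δ form). -/
lemma hutchinson_aux_equi {X : Type*} [MetricSpace X] {I : Type*} (f : I → X → X)
    (hcont : ∀ i, Continuous (f i))
    (hcompact : IsCompact (Set.range (fun i => UniformFun.ofFun (f i)) : Set (UniformFun X X))) :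
    ∀ (x₀ : X) (ε : ℝ), 0 < ε → ∃ r > 0, ∀ x, dist x x₀ < r →
      ∀ i, dist (f i x) (f i x₀) < ε := by
  intro x₀ ε hε
  have htb := totallyBounded_iff_subset.mp hcompact.totallyBounded
  have hV : {p : X × X | dist p.1 p.2 < ε / 3} ∈ 𝓤 X :=
    Metric.dist_mem_uniformity (by linarith)
  have hgen : UniformFun.gen X X {p : X × X | dist p.1 p.2 < ε / 3}
      ∈ 𝓤 (UniformFun X X) :=
    (UniformFun.hasBasis_uniformity X X).mem_of_mem hV
  obtain ⟨t, hts, htf, hcover⟩ := htb _ hgen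
  -- each element of `t` is a continuous function; hence eventually close to its value at x₀
  have hev : ∀ᶠ x in 𝓝 x₀, ∀ g ∈ t,
      dist (UniformFun.toFun g x) (UniformFun.toFun g x₀) < ε / 3 := by
    rw [eventually_all_finite htf]
    intro g hg
    obtain ⟨i, hi⟩ := hts hg
    subst hi
    exact (Metric.tendsto_nhds.mp ((hcont i).tendsto x₀)) (ε / 3) (by linarith)
  rw [Metric.eventually_nhds_iff] at hev
  obtain ⟨r, hr, hball⟩ := hev
  refine ⟨r, hr, fun x hx i => ?_⟩
  obtain ⟨g, hg, hig⟩ := mem_iUnion₂.mp (hcover (mem_range_self (f := fun i =>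
    UniformFun.ofFun (f i)) i))
  have h1 : ∀ z, dist (f i z) (UniformFun.toFun g z) < ε / 3 := hig
  have h2 := hball hx g hg
  calc dist (f i x) (f i x₀)
      ≤ dist (f i x) (UniformFun.toFun g x) + dist (UniformFun.toFun g x) (UniformFun.toFun g x₀)
        + dist (UniformFun.toFun g x₀) (f i x₀) := dist_triangle4 _ _ _ _
    _ < ε / 3 + ε / 3 + ε / 3 := by
        have := h1 x
        have := h1 x₀
        rw [dist_comm (UniformFun.toFun g x₀)]
        gcongr
    _ = ε := by ring

/-- Evaluation is continuous at any pair whose first coordinate is a continuous function. -/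
lemma hutchinson_aux_eval {X : Type*} [MetricSpace X] (g₀ : UniformFun X X) (x₀ : X)
    (h : Continuous (UniformFun.toFun g₀)) :
    ContinuousAt (fun p : UniformFun X X × X => UniformFun.toFun p.1 p.2) (g₀, x₀) := by
  rw [ContinuousAt, Metric.tendsto_nhds]
  intro ε hε
  have hV : {p : X × X | dist p.1 p.2 < ε / 2} ∈ 𝓤 X :=
    Metric.dist_mem_uniformity (by linarith)
  have hgen : UniformFun.gen X X {p : X × X | dist p.1 p.2 < ε / 2}
      ∈ 𝓤 (UniformFun X X) :=
    (UniformFun.hasBasis_uniformity X X).mem_of_mem hV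
  have h1 : UniformSpace.ball g₀ (UniformFun.gen X X {p : X × X | dist p.1 p.2 < ε / 2})
      ∈ 𝓝 g₀ := UniformSpace.ball_mem_nhds _ hgen
  have h2 : {x | dist (UniformFun.toFun g₀ x) (UniformFun.toFun g₀ x₀) < ε / 2} ∈ 𝓝 x₀ :=
    (Metric.tendsto_nhds.mp (h.tendsto x₀)) (ε / 2) (by linarith)
  filter_upwards [prod_mem_nhds h1 h2] with p hp
  obtain ⟨hp1, hp2⟩ := hp
  have hp1' : ∀ z, dist (UniformFun.toFun g₀ z) (UniformFun.toFun p.1 z) < ε / 2 := hp1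
  calc dist (UniformFun.toFun p.1 p.2) (UniformFun.toFun g₀ x₀)
      ≤ dist (UniformFun.toFun p.1 p.2) (UniformFun.toFun g₀ p.2)
        + dist (UniformFun.toFun g₀ p.2) (UniformFun.toFun g₀ x₀) := dist_triangle _ _ _
    _ < ε / 2 + ε / 2 := by
        have := hp1' p.2
        rw [dist_comm] at this
        exact add_lt_add this hp2
    _ = ε := by ring

theorem hutchinson_of_compact_ifs_continuous {X : Type*} [MetricSpace X]
    {I : Type*} [Nonempty I] (f : I → X → X)
    (hcont : ∀ i, Continuous (f i))
    (hcompact : IsCompact (Set.range (fun i => UniformFun.ofFun (f i)) : Set (UniformFun X X)))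
    (F : Set X → Set X) (hF : ∀ B : Set X, F B = closure (⋃ i, f i '' B)) :
    (∀ B : Set X, B.Nonempty → IsCompact B → (F B).Nonempty ∧ IsCompact (F B)) ∧
    (∀ C : Set X, C.Nonempty → IsCompact C → ∀ ε > (0 : ℝ), ∃ δ > (0 : ℝ),
      ∀ B : Set X, B.Nonempty → IsCompact B →
        EMetric.hausdorffEdist B C < ENNReal.ofReal δ →
        EMetric.hausdorffEdist (F B) (F C) ≤ ENNReal.ofReal ε) := by
  set K : Set (UniformFun X X) := Set.range (fun i => UniformFun.ofFun (f i)) with hKdef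
  -- compactness of the union, for any compact B
  have hScompact : ∀ B : Set X, IsCompact B → IsCompact (⋃ i, f i '' B) := by
    intro B hB
    have hev : ContinuousOn (fun p : UniformFun X X × X => UniformFun.toFun p.1 p.2)
        (K ×ˢ B) := by
      intro p hp
      obtain ⟨i, hi⟩ := hp.1
      have : Continuous (UniformFun.toFun p.1) := by
        rw [← hi]; exact hcont i
      exact (hutchinson_aux_eval p.1 p.2 this).continuousWithinAt
    have himg := (hcompact.prod hB).image_of_continuousOn hev
    have heq : (fun p : UniformFun X X × X => UniformFun.toFun p.1 p.2) '' (K ×ˢ B)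
        = ⋃ i, f i '' B := by
      ext y
      constructor
      · rintro ⟨⟨g, b⟩, ⟨⟨i, hi⟩, hb⟩, rfl⟩
        exact mem_iUnion.mpr ⟨i, ⟨b, hb, congrFun (congrArg UniformFun.toFun hi) b⟩⟩
      · rintro hy
        obtain ⟨i, b, hb, rfl⟩ := by
          simpa using hy
        exact ⟨(UniformFun.ofFun (f i), b), ⟨⟨i, rfl⟩, hb⟩, rfl⟩
    rwa [heq] at himg
  constructor
  · intro B hBne hB
    have hS := hScompact B hB
    have hclosed : closure (⋃ i, f i '' B) = ⋃ i, f i '' B := hS.isClosed.closure_eq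
    constructor
    · rw [hF B]
      obtain ⟨b, hb⟩ := hBne
      obtain ⟨i⟩ := ‹Nonempty I›
      exact ⟨f i b, subset_closure (mem_iUnion.mpr ⟨i, ⟨b, hb, rfl⟩⟩)⟩
    · rw [hF B, hclosed]; exact hS
  · intro C hCne hC ε hε
    -- equicontinuity radii around points of C
    have key := hutchinson_aux_equi f hcont hcompact
    choose r hr hrball using fun c : X => key c (ε / 2) (by linarith)
    -- finite subcover
    obtain ⟨T, hTC, hTcover⟩ := hC.elim_nhds_subcover (fun c => Metric.ball c (r c / 2))
      (fun c _ => Metric.ball_mem_nhds c (by linarith [hr c]))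
    have hTne : T.Nonempty := by
      by_contra h
      rw [Finset.not_nonempty_iff_eq_empty] at h
      obtain ⟨c, hc⟩ := hCne
      have := hTcover hc
      simp [h] at this
    set δ : ℝ := T.inf' hTne (fun c => r c / 2) with hδdef
    have hδpos : 0 < δ := by
      rw [hδdef, Finset.lt_inf'_iff]
      exact fun c _ => by linarith [hr c]
    refine ⟨δ, hδpos, fun B hBne hB hBC => ?_⟩
    rw [hF B, hF C]
    show Metric.hausdorffEDist _ _ ≤ _
    rw [Metric.hausdorffEDist_closure]
    -- the key two-sided estimate
    have main : ∀ b c : X, c ∈ C → dist b c < δ → ∀ i, dist (f i b) (f i c) < ε := by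
      intro b c hc hbc i
      obtain ⟨c₀, hc₀T, hcc₀⟩ := mem_iUnion₂.mp (hTcover hc)
      have hδle : δ ≤ r c₀ / 2 := Finset.inf'_le _ hc₀T
      have hcc₀' : dist c c₀ < r c₀ / 2 := hcc₀
      have hbc₀ : dist b c₀ < r c₀ := by
        calc dist b c₀ ≤ dist b c + dist c c₀ := dist_triangle _ _ _
          _ < δ + r c₀ / 2 := by gcongr
          _ ≤ r c₀ / 2 + r c₀ / 2 := by gcongr
          _ = r c₀ := by ring
      have h1 := hrball c₀ b hbc₀ i
      have h2 := hrball c₀ c (by linarith [hr c₀]) i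
      calc dist (f i b) (f i c)
          ≤ dist (f i b) (f i c₀) + dist (f i c₀) (f i c) := dist_triangle _ _ _
        _ < ε / 2 + ε / 2 := by rw [dist_comm (f i c₀)]; exact add_lt_add h1 h2
        _ = ε := by ring
    apply EMetric.hausdorffEdist_le_of_mem_edist
    · rintro x hx
      obtain ⟨i, b, hb, rfl⟩ := by simpa using hx
      have : EMetric.infEdist b C < ENNReal.ofReal δ :=
        lt_of_le_of_lt (EMetric.infEdist_le_hausdorffEdist_of_mem hb) hBC
      obtain ⟨c, hc, hbc⟩ := EMetric.infEdist_lt_iff.mp this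
      have hbc' : dist b c < δ := by
        rw [edist_dist] at hbc
        exact (ENNReal.ofReal_lt_ofReal_iff_of_nonneg dist_nonneg).mp hbc
      refine ⟨f i c, mem_iUnion.mpr ⟨i, ⟨c, hc, rfl⟩⟩, ?_⟩
      rw [edist_dist]
      exact ENNReal.ofReal_le_ofReal (le_of_lt (main b c hc hbc' i))
    · rintro y hy
      obtain ⟨i, c, hc, rfl⟩ := by simpa using hy
      have : EMetric.infEdist c B < ENNReal.ofReal δ := by
        change Metric.hausdorffEDist B C < _ at hBC
        rw [Metric.hausdorffEDist_comm] at hBC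
        exact lt_of_le_of_lt (EMetric.infEdist_le_hausdorffEdist_of_mem hc) hBC
      obtain ⟨b, hb, hcb⟩ := EMetric.infEdist_lt_iff.mp this
      have hcb' : dist b c < δ := by
        rw [edist_dist, dist_comm] at hcb
        exact (ENNReal.ofReal_lt_ofReal_iff_of_nonneg dist_nonneg).mp hcb
      refine ⟨f i b, mem_iUnion.mpr ⟨i, ⟨b, hb, rfl⟩⟩, ?_⟩
      rw [edist_dist, dist_comm]
      exact ENNReal.ofReal_le_ofReal (le_of_lt (main b c hc hcb' i))
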